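/- Let L = R·p₁ (an isotropic line of (V,Ω)) and let 𝔭₂ = {X ∈ sp(V) : X(L) ⊆ L} be its stabilizer. Then a Lie subalgebra h ⊆ 𝔭₂ has finite type if and only if the ideal h̃ = {X ∈ h : X(p₁) = 0} of h has finite type. -/

import Mathlib

open Module

attribute [local instance 100] LieRing.ofAssociativeRing
attribute [local instance 100] LieAlgebra.ofAssociativeAlgebra

abbrev V4 : Type := Fin 4 → ℝ

noncomputable section

def Om (u v : V4) : ℝ :=
  -(u 0 * v 2 - u 2 * v 0) - (u 1 * v 3 - u 3 * v 1)

def sp4 : Set (Module.End ℝ V4) :=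
  {X | ∀ u v : V4, Om (X u) v + Om u (X v) = 0}

def pp1 : V4 := ![1,0,0,0]
def pp2 : V4 := ![0,1,0,0]
def qq1 : V4 := ![0,0,1,0]
def qq2 : V4 := ![0,0,0,1]

lemma Om_add_left (a b v : V4) : Om (a + b) v = Om a v + Om b v := by
  simp [Om]; ring
lemma Om_smul_left (c : ℝ) (a v : V4) : Om (c • a) v = c * Om a v := by
  simp [Om]; ring
lemma Om_add_right (u a b : V4) : Om u (a + b) = Om u a + Om u b := by
  simp [Om]; ring
lemma Om_smul_right (c : ℝ) (u a : V4) : Om u (c • a) = c * Om u a := by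
  simp [Om]; ring

def quad (u v : V4) : Module.End ℝ V4 where
  toFun w := Om u w • v + Om v w • u
  map_add' a b := by
    try simp only []
    rw [Om_add_right, Om_add_right, add_smul, add_smul]; abel
  map_smul' c a := by
    try simp only []
    rw [Om_smul_right, Om_smul_right, RingHom.id_apply, mul_smul, mul_smul, smul_add]

def InProl (h : Set (Module.End ℝ V4)) (k : ℕ)
    (T : MultilinearMap ℝ (fun _ : Fin (k+1) => V4) V4) : Prop :=
  (∀ (σ : Equiv.Perm (Fin (k+1))) (v : Fin (k+1) → V4), (T fun i => v (σ i)) = T v) ∧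
  (∀ v : Fin k → V4, ∃ A ∈ h, ∀ w : V4, A w = T (Fin.snoc v w))

def FiniteType (h : Set (Module.End ℝ V4)) : Prop :=
  ∃ k : ℕ, 1 ≤ k ∧
    ∀ T : MultilinearMap ℝ (fun _ : Fin (k+1) => V4) V4, InProl h k T → T = 0

/-- The isotropic line `L = ℝ·p₁`. -/
def Lline : Submodule ℝ V4 := Submodule.span ℝ {pp1}

/-- The maximal parabolic `𝔭₂ = {X ∈ sp(V) : X(L) ⊆ L}`. -/
def par2 : Set (Module.End ℝ V4) := {X ∈ sp4 | ∀ w ∈ Lline, X w ∈ Lline}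


lemma mem_Lline_iff (x : V4) : x ∈ Lline ↔ ∃ c : ℝ, x = c • pp1 := by
  rw [Lline, Submodule.mem_span_singleton]
  constructor
  · rintro ⟨c, rfl⟩; exact ⟨c, rfl⟩
  · rintro ⟨c, rfl⟩; exact ⟨c, rfl⟩

lemma pp1_mem_Lline : pp1 ∈ Lline := Submodule.mem_span_singleton_self _

lemma Om_pp1_pp1 : Om pp1 pp1 = 0 := by simp [Om, pp1]
lemma Om_pp1_qq1 : Om pp1 qq1 = -1 := by simp [Om, pp1, qq1]
lemma Om_antisym (u v : V4) : Om u v = -Om v u := by simp [Om]; ring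

lemma swap_zero_last {n : ℕ} (u : Fin n → V4) (x y : V4) :
    (fun i => (Fin.snoc (Fin.cons x u) y : Fin (n+2) → V4) (Equiv.swap 0 (Fin.last (n+1)) i))
      = Fin.snoc (Fin.cons y u) x := by
  funext i
  refine Fin.lastCases ?_ (fun j => ?_) i
  · rw [Equiv.swap_apply_right, Fin.snoc_last]
    show (Fin.snoc (Fin.cons x u) y : Fin (n+2) → V4) (Fin.castSucc 0) = x
    rw [Fin.snoc_castSucc, Fin.cons_zero]
  · refine Fin.cases ?_ (fun j' => ?_) j
    · rw [Fin.castSucc_zero, Equiv.swap_apply_left, Fin.snoc_last]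
      show y = (Fin.snoc (Fin.cons y u) x : Fin (n+2) → V4) (Fin.castSucc 0)
      rw [Fin.snoc_castSucc, Fin.cons_zero]
    · have h1 : Fin.castSucc (Fin.succ j') ≠ (0 : Fin (n+2)) := by
        simp [Fin.ext_iff]
      have h2 : Fin.castSucc (Fin.succ j') ≠ Fin.last (n+1) :=
        Fin.ne_of_lt (Fin.castSucc_lt_last _)
      rw [Equiv.swap_apply_of_ne_of_ne h1 h2, Fin.snoc_castSucc, Fin.snoc_castSucc,
        Fin.cons_succ, Fin.cons_succ]

lemma cons_comp_decompose {n : ℕ} (σ : Equiv.Perm (Fin n)) (x : V4) (v : Fin n → V4) :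
    (fun i => (Fin.cons x v : Fin (n+1) → V4) ((Equiv.Perm.decomposeFin.symm (0, σ)) i))
      = Fin.cons x (fun i => v (σ i)) := by
  funext i
  refine Fin.cases ?_ (fun j => ?_) i
  · rw [Equiv.Perm.decomposeFin_symm_apply_zero, Fin.cons_zero, Fin.cons_zero]
  · rw [Equiv.Perm.decomposeFin_symm_apply_succ, Equiv.swap_self]
    show (Fin.cons x v : Fin (n+1) → V4) (Fin.succ (σ j)) = _
    rw [Fin.cons_succ, Fin.cons_succ]

/-- a subalgebra `h ⊆ 𝔭₂` has finite type iff the ideal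
`h̃ = {X ∈ h : X(p₁) = 0}` has finite type. -/
theorem finite_type_in_par2_iff
    (h : LieSubalgebra ℝ (Module.End ℝ V4))
    (hsub : (h : Set (Module.End ℝ V4)) ⊆ par2) :
    FiniteType (h : Set (Module.End ℝ V4)) ↔
      FiniteType {X ∈ (h : Set (Module.End ℝ V4)) | X pp1 = 0} := by
  constructor
  · rintro ⟨k, hk1, hk⟩
    refine ⟨k, hk1, fun T hT => hk T ⟨hT.1, fun v => ?_⟩⟩
    obtain ⟨A, hA, hAw⟩ := hT.2 v
    exact ⟨A, hA.1, hAw⟩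
  · rintro ⟨k, hk1, hk⟩
    refine ⟨k+1, by omega, fun T hT => ?_⟩
    obtain ⟨hsym, hend⟩ := hT
    have key : ∀ (u : Fin k → V4) (x y : V4),
        T (Fin.snoc (Fin.cons x u) y) = T (Fin.snoc (Fin.cons y u) x) := by
      intro u x y
      have := hsym (Equiv.swap 0 (Fin.last (k+1))) (Fin.snoc (Fin.cons x u) y)
      rw [swap_zero_last] at this
      exact this.symm
    have hline : ∀ v : Fin (k+1) → V4, ∃ c : ℝ, T (Fin.snoc v pp1) = c • pp1 := by
      intro v
      obtain ⟨A, hA, hAw⟩ := hend v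
      have hm := (hsub hA).2 pp1 pp1_mem_Lline
      obtain ⟨c, hc⟩ := (mem_Lline_iff _).1 hm
      exact ⟨c, by rw [← hAw]; exact hc⟩
    have hsp : ∀ A ∈ sp4, ∀ a b : V4, Om (A a) b = Om (A b) a := by
      intro A hA a b
      have h1 := hA a b
      have h2 := Om_antisym a (A b)
      linarith
    have hzero2 : ∀ u : Fin k → V4, T (Fin.snoc (Fin.cons pp1 u) pp1) = 0 := by
      intro u
      obtain ⟨c₁, hc₁⟩ := hline (Fin.cons pp1 u)
      obtain ⟨c₂, hc₂⟩ := hline (Fin.cons qq1 u)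
      obtain ⟨A, hA, hAw⟩ := hend (Fin.cons pp1 u)
      have e1 : Om (T (Fin.snoc (Fin.cons pp1 u) pp1)) qq1 = -c₁ := by
        rw [hc₁, Om_smul_left, Om_pp1_qq1]; ring
      have e2 : Om (T (Fin.snoc (Fin.cons pp1 u) pp1)) qq1
          = Om (T (Fin.snoc (Fin.cons pp1 u) qq1)) pp1 := by
        rw [← hAw, ← hAw]
        exact hsp A (hsub hA).1 pp1 qq1
      have e3 : Om (T (Fin.snoc (Fin.cons pp1 u) qq1)) pp1 = 0 := by
        rw [key u pp1 qq1, hc₂, Om_smul_left, Om_pp1_pp1, mul_zero]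
      have hc : c₁ = 0 := by rw [e2, e3] at e1; linarith
      rw [hc₁, hc, zero_smul]
    have hS : ∀ x : V4, (∀ u : Fin k → V4, T (Fin.snoc (Fin.cons x u) pp1) = 0) →
        T.curryLeft x = 0 := by
      intro x hx
      apply hk
      constructor
      · intro σ v
        have := hsym (Equiv.Perm.decomposeFin.symm (0, σ)) (Fin.cons x v)
        rw [cons_comp_decompose] at this
        simp only [MultilinearMap.curryLeft_apply]
        exact this
      · intro u
        obtain ⟨A, hA, hAw⟩ := hend (Fin.cons x u)
        refine ⟨A, ⟨hA, ?_⟩, fun w => ?_⟩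
        · rw [hAw pp1]; exact hx u
        · rw [MultilinearMap.curryLeft_apply, Fin.cons_snoc_eq_snoc_cons]
          exact hAw w
    have hz1 : ∀ v : Fin (k+1) → V4, T (Fin.cons pp1 v) = 0 := by
      intro v
      have h0 := hS pp1 hzero2
      calc T (Fin.cons pp1 v) = (T.curryLeft pp1) v := rfl
        _ = 0 := by rw [h0]; rfl
    have hzx : ∀ (x : V4) (u : Fin k → V4), T (Fin.snoc (Fin.cons x u) pp1) = 0 := by
      intro x u
      rw [key u x pp1, ← Fin.cons_snoc_eq_snoc_cons]
      exact hz1 (Fin.snoc u x)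
    apply MultilinearMap.ext
    intro v
    have h4 : T.curryLeft (v 0) = 0 := hS (v 0) (hzx (v 0))
    calc T v = T (Fin.cons (v 0) (Fin.tail v)) := by rw [Fin.cons_self_tail]
      _ = (T.curryLeft (v 0)) (Fin.tail v) := rfl
      _ = 0 := by rw [h4]; rfl
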